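/- Let α > 1, p > 1, and let (c_j)_{j≥0} be nonnegative reals with ∑_{j=0}^∞ c_j^p < ∞. Define a_k = ∑_{j=k}^∞ c_j α^{-2j}. Then ∑_{k=0}^∞ a_k^p α^{2pk} < ∞. -/

import Mathlib

open Real

/-- For `α > 1`, `p > 1` and nonnegative `(c_j)` with `∑ c_j^p < ∞`, the tail
sums `a_k = ∑_{j ≥ k} c_j α^(-2j)` satisfy `∑ a_k^p α^(2pk) < ∞`. -/
theorem summable_tail_sums
    (α p : ℝ) (hα : 1 < α) (hp : 1 < p)
    (c : ℕ → ℝ) (hc : ∀ j, 0 ≤ c j)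
    (hsum : Summable fun j : ℕ => c j ^ p)
    (a : ℕ → ℝ)
    (ha : ∀ k, a k = ∑' j : ℕ, c (k + j) * α ^ (-2 * (((k + j : ℕ)) : ℝ))) :
    Summable fun k : ℕ => a k ^ p * α ^ (2 * p * (k:ℝ)) := by
  have hα0 : (0:ℝ) < α := lt_trans one_pos hα
  have hα0' : (0:ℝ) ≤ α := le_of_lt hα0
  have hp0 : (0:ℝ) < p := lt_trans one_pos hp
  have hpq : p.HolderConjugate p.conjExponent := Real.HolderConjugate.conjExponent hp
  set q := p.conjExponent with hq
  have hq0 : (0:ℝ) < q := hpq.symm.pos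
  -- geometric summability of j ↦ α ^ (-(r) * j) for r > 0
  have geom : ∀ r : ℝ, 0 < r → Summable fun j : ℕ => α ^ (-r * (j:ℝ)) := by
    intro r hr
    have h1 : α ^ (-r) < 1 := Real.rpow_lt_one_of_one_lt_of_neg hα (neg_neg_of_pos hr)
    have h0 : 0 ≤ α ^ (-r) := Real.rpow_nonneg hα0' _
    have := summable_geometric_of_lt_one h0 h1
    refine this.congr fun j => ?_
    rw [← Real.rpow_natCast (α ^ (-r)) j, ← Real.rpow_mul hα0']
  have hS : 0 ≤ ∑' n, c n ^ p := tsum_nonneg fun n => Real.rpow_nonneg (hc _) _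
  -- the double family, summed in the (j,k) order
  have hswap : Summable (fun jk : ℕ × ℕ => c (jk.2 + jk.1) ^ p * α ^ (-p * (jk.1:ℝ))) := by
    rw [summable_prod_of_nonneg (fun jk =>
      mul_nonneg (Real.rpow_nonneg (hc _) _) (Real.rpow_nonneg hα0' _))]
    constructor
    · intro j
      show Summable fun k : ℕ => c (k + j) ^ p * α ^ (-p * (j:ℝ))
      exact (hsum.comp_injective (add_left_injective j)).mul_right _
    · have hb : Summable fun j : ℕ => (∑' n, c n ^ p) * α ^ (-p * (j:ℝ)) :=
        (geom p hp0).mul_left _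
      show Summable fun j : ℕ => ∑' k : ℕ, c (k + j) ^ p * α ^ (-p * (j:ℝ))
      refine Summable.of_nonneg_of_le (fun j => tsum_nonneg fun k =>
        mul_nonneg (Real.rpow_nonneg (hc _) _) (Real.rpow_nonneg hα0' _)) (fun j => ?_) hb
      have hsk : Summable fun k : ℕ => c (k + j) ^ p :=
        hsum.comp_injective (add_left_injective j)
      show (∑' k : ℕ, c (k + j) ^ p * α ^ (-p * (j:ℝ))) ≤ (∑' n, c n ^ p) * α ^ (-p * (j:ℝ))
      calc (∑' k : ℕ, c (k + j) ^ p * α ^ (-p * (j:ℝ)))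
          = (∑' k : ℕ, c (k + j) ^ p) * α ^ (-p * (j:ℝ)) := tsum_mul_right
        _ ≤ (∑' n, c n ^ p) * α ^ (-p * (j:ℝ)) := by
            apply mul_le_mul_of_nonneg_right _ (Real.rpow_nonneg hα0' _)
            exact hsk.tsum_le_tsum_of_inj (fun k => k + j) (add_left_injective j)
              (fun n _ => Real.rpow_nonneg (hc _) _) (fun k => le_rfl) hsum
  have hFsum : Summable (fun kj : ℕ × ℕ => c (kj.1 + kj.2) ^ p * α ^ (-p * (kj.2:ℝ))) :=
    hswap.prod_symm
  have hFrows := (summable_prod_of_nonneg (f := fun kj : ℕ × ℕ =>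
      c (kj.1 + kj.2) ^ p * α ^ (-p * (kj.2:ℝ)))
    (fun kj => mul_nonneg (Real.rpow_nonneg (hc _) _) (Real.rpow_nonneg hα0' _))).mp hFsum
  have hFrow : Summable fun k : ℕ => ∑' j : ℕ, c (k + j) ^ p * α ^ (-p * (j:ℝ)) := hFrows.2
  -- constant from Hölder
  have hGq : Summable fun j : ℕ => (α ^ (-(j:ℝ))) ^ q := by
    refine (geom q hq0).congr fun j => ?_
    rw [← Real.rpow_mul hα0']
    ring_nf
  set G : ℝ := (∑' j : ℕ, (α ^ (-(j:ℝ))) ^ q) ^ (1 / q) with hG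
  have hG0 : 0 ≤ G :=
    Real.rpow_nonneg (tsum_nonneg fun j => Real.rpow_nonneg (Real.rpow_nonneg hα0' _) _) _
  have ha0 : ∀ k, 0 ≤ a k := by
    intro k
    rw [ha k]
    exact tsum_nonneg fun j => mul_nonneg (hc _) (Real.rpow_nonneg hα0' _)
  -- the key per-k estimate
  have key : ∀ k : ℕ, a k ^ p * α ^ (2 * p * (k:ℝ))
      ≤ (∑' j : ℕ, c (k + j) ^ p * α ^ (-p * (j:ℝ))) * G ^ p := by
    intro k
    have hf0 : ∀ j : ℕ, 0 ≤ c (k + j) * α ^ (-(j:ℝ)) :=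
      fun j => mul_nonneg (hc _) (Real.rpow_nonneg hα0' _)
    have hg0 : ∀ j : ℕ, (0:ℝ) ≤ α ^ (-(j:ℝ)) := fun j => Real.rpow_nonneg hα0' _
    have hfp : ∀ j : ℕ, (c (k + j) * α ^ (-(j:ℝ))) ^ p = c (k + j) ^ p * α ^ (-p * (j:ℝ)) := by
      intro j
      rw [Real.mul_rpow (hc _) (Real.rpow_nonneg hα0' _), ← Real.rpow_mul hα0']
      ring_nf
    have hrow : Summable fun j : ℕ => c (k + j) ^ p * α ^ (-p * (j:ℝ)) := hFrows.1 k
    have hf_sum : Summable fun j : ℕ => (c (k + j) * α ^ (-(j:ℝ))) ^ p :=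
      hrow.congr fun j => (hfp j).symm
    have holder := inner_le_Lp_mul_Lq_tsum_of_nonneg hpq hf0 hg0 hf_sum hGq
    have hak : a k * α ^ (2 * (k:ℝ)) = ∑' j : ℕ, (c (k + j) * α ^ (-(j:ℝ))) * α ^ (-(j:ℝ)) := by
      rw [ha k]
      have hterm : ∀ j : ℕ, c (k + j) * α ^ (-2 * (((k + j : ℕ)) : ℝ))
          = α ^ (-2 * (k:ℝ)) * ((c (k + j) * α ^ (-(j:ℝ))) * α ^ (-(j:ℝ))) := by
        intro j
        push_cast
        rw [show (-2 : ℝ) * ((k:ℝ) + (j:ℝ)) = (-2 * (k:ℝ)) + (-(j:ℝ)) + (-(j:ℝ)) by ring,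
          Real.rpow_add hα0, Real.rpow_add hα0]
        ring
      rw [tsum_congr hterm, tsum_mul_left, mul_comm (α ^ (-2*(k:ℝ))), mul_assoc,
        ← Real.rpow_add hα0]
      norm_num
    have htsum1 : 0 ≤ ∑' j : ℕ, (c (k + j) * α ^ (-(j:ℝ))) ^ p :=
      tsum_nonneg fun j => Real.rpow_nonneg (hf0 j) _
    have step1 : a k ^ p * α ^ (2 * p * (k:ℝ))
        = (∑' j : ℕ, (c (k + j) * α ^ (-(j:ℝ))) * α ^ (-(j:ℝ))) ^ p := by
      rw [← hak, Real.mul_rpow (ha0 k) (Real.rpow_nonneg hα0' _), ← Real.rpow_mul hα0']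
      ring_nf
    rw [step1]
    calc (∑' j : ℕ, (c (k + j) * α ^ (-(j:ℝ))) * α ^ (-(j:ℝ))) ^ p
        ≤ ((∑' j : ℕ, (c (k + j) * α ^ (-(j:ℝ))) ^ p) ^ (1/p) * G) ^ p := by
          exact Real.rpow_le_rpow (tsum_nonneg fun j => mul_nonneg (hf0 j) (hg0 j))
            holder (le_of_lt hp0)
      _ = (∑' j : ℕ, (c (k + j) * α ^ (-(j:ℝ))) ^ p) * G ^ p := by
          rw [Real.mul_rpow (Real.rpow_nonneg htsum1 _) hG0,
            ← Real.rpow_mul htsum1, one_div, inv_mul_cancel₀ (ne_of_gt hp0), Real.rpow_one]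
      _ = (∑' j : ℕ, c (k + j) ^ p * α ^ (-p * (j:ℝ))) * G ^ p := by rw [tsum_congr hfp]
  refine Summable.of_nonneg_of_le (fun k =>
    mul_nonneg (Real.rpow_nonneg (ha0 k) _) (Real.rpow_nonneg hα0' _)) key (hFrow.mul_right _)
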